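/- Let n ≥ 1, let G be a forest (an acyclic simple graph) on the vertex set {1, …, n}, and let w assign to each edge of G a real number in [0, 1]. Define the real symmetric n×n matrix X by: X_{ii} = 1 for all i; for i ≠ j in the same connected component of G, X_{ij} is the minimum of w(ℓ) over the edges ℓ of the unique path in G from i to j; and X_{ij} = 0 if i and j lie in different connected components. Then X is positive semidefinite. -/

import Mathlib

open MeasureTheory

/-- Let `G` be a forest on `{1, …, n}` with edge weights `w` in `[0,1]`.  Let `X` be the
symmetric matrix with `X i i = 1`, `X i j` the minimum of the weights along the unique
path from `i` to `j` when `i ≠ j` are in the same component, and `X i j = 0` when `i, j`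
lie in different components.  Then `X` is positive semidefinite. -/
theorem forest_path_min_matrix_posSemidef (n : ℕ) (hn : 1 ≤ n)
    (G : SimpleGraph (Fin n)) (hG : G.IsAcyclic)
    (w : Sym2 (Fin n) → ℝ) (hw : ∀ e ∈ G.edgeSet, w e ∈ Set.Icc (0 : ℝ) 1)
    (X : Matrix (Fin n) (Fin n) ℝ)
    (hdiag : ∀ i, X i i = 1)
    (hpath : ∀ i j, i ≠ j → ∀ P : G.Walk i j, P.IsPath →
      (P.edges.map w).minimum = (X i j : WithTop ℝ))
    (hsep : ∀ i j, ¬ G.Reachable i j → X i j = 0) :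
    X.PosSemidef := by
  classical
  -- for reachable `i ≠ j`, there is a path whose min weight is `X i j`
  have hXpath : ∀ i j, i ≠ j → G.Reachable i j → ∃ P : G.Walk i j, P.IsPath ∧
      X i j ∈ P.edges.map w ∧ ∀ a ∈ P.edges.map w, X i j ≤ a := by
    intro i j hij hr
    obtain ⟨W⟩ := hr
    refine ⟨W.toPath, W.toPath.2, ?_⟩
    have h := hpath i j hij W.toPath W.toPath.2
    rwa [List.minimum_eq_coe_iff] at h
  -- entries lie in `[0,1]`
  have hbound : ∀ i j, X i j ∈ Set.Icc (0:ℝ) 1 := by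
    intro i j
    by_cases hij : i = j
    · subst hij; rw [hdiag]; exact ⟨zero_le_one, le_refl 1⟩
    by_cases hr : G.Reachable i j
    · obtain ⟨P, hP, hmem, -⟩ := hXpath i j hij hr
      obtain ⟨e, he, hwe⟩ := List.mem_map.mp hmem
      exact hwe ▸ hw e (P.edges_subset_edgeSet he)
    · rw [hsep i j hr]; exact ⟨le_refl 0, zero_le_one⟩
  -- symmetry
  have hsymm : ∀ i j, X i j = X j i := by
    intro i j
    by_cases hij : i = j
    · rw [hij]
    by_cases hr : G.Reachable i j
    · obtain ⟨P, hP, hmem, hle⟩ := hXpath i j hij hr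
      have h2 := hpath j i (Ne.symm hij) P.reverse hP.reverse
      rw [List.minimum_eq_coe_iff] at h2
      obtain ⟨hmem2, hle2⟩ := h2
      rw [SimpleGraph.Walk.edges_reverse, List.map_reverse] at hmem2 hle2
      rw [List.mem_reverse] at hmem2
      exact le_antisymm (hle _ hmem2) (hle2 _ (List.mem_reverse.mpr hmem))
    · rw [hsep i j hr, hsep j i (fun h => hr h.symm)]
  -- from an arbitrary walk with all weights `≥ t` we get `t ≤ X i j`
  have hC2 : ∀ (t : ℝ) (i j : Fin n), i ≠ j → ∀ P : G.Walk i j,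
      (∀ e ∈ P.edges, t ≤ w e) → t ≤ X i j := by
    intro t i j hij P hP
    have h := hpath i j hij P.toPath P.toPath.2
    have hle : (t : WithTop ℝ) ≤ ((P.toPath : G.Walk i j).edges.map w).minimum := by
      apply List.le_minimum_of_forall_le
      intro a ha
      obtain ⟨e, he, rfl⟩ := List.mem_map.mp ha
      exact WithTop.coe_le_coe.mpr (hP e (P.edges_toPath_subset he))
    rw [h] at hle
    exact WithTop.coe_le_coe.mp hle
  -- transitivity of the level relation
  have htrans : ∀ t : ℝ, 0 < t → ∀ i j k : Fin n,
      (i = j ∨ t ≤ X i j) → (j = k ∨ t ≤ X j k) → (i = k ∨ t ≤ X i k) := by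
    intro t ht i j k h1 h2
    by_cases hij : i = j
    · subst hij; exact h2
    by_cases hjk : j = k
    · subst hjk; exact h1
    by_cases hik : i = k
    · exact Or.inl hik
    replace h1 : t ≤ X i j := h1.resolve_left hij
    replace h2 : t ≤ X j k := h2.resolve_left hjk
    have hrij : G.Reachable i j := by
      by_contra hr; rw [hsep i j hr] at h1; linarith
    have hrjk : G.Reachable j k := by
      by_contra hr; rw [hsep j k hr] at h2; linarith
    obtain ⟨P, hP, -, hleP⟩ := hXpath i j hij hrij
    obtain ⟨Q, hQ, -, hleQ⟩ := hXpath j k hjk hrjk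
    refine Or.inr (hC2 t i k hik (P.append Q) ?_)
    intro e he
    rw [SimpleGraph.Walk.edges_append, List.mem_append] at he
    rcases he with he | he
    · exact le_trans h1 (hleP _ (List.mem_map_of_mem (f := w) he))
    · exact le_trans h2 (hleQ _ (List.mem_map_of_mem (f := w) he))
  -- for each `t > 0`, choose representatives of the equivalence classes
  have hrel : ∀ t : ℝ, 0 < t → ∃ r : Fin n → Fin n,
      ∀ i j, (i = j ∨ t ≤ X i j) ↔ r i = r j := by
    intro t ht
    have hRsymm : ∀ i j : Fin n, (i = j ∨ t ≤ X i j) → (j = i ∨ t ≤ X j i) := by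
      intro i j h
      rcases h with rfl | h
      · exact Or.inl rfl
      · exact Or.inr (hsymm i j ▸ h)
    have hne : ∀ i : Fin n, (Finset.univ.filter (fun j => i = j ∨ t ≤ X i j)).Nonempty :=
      fun i => ⟨i, by simp⟩
    refine ⟨fun i => (Finset.univ.filter (fun j => i = j ∨ t ≤ X i j)).min' (hne i), ?_⟩
    intro i j
    constructor
    · intro h
      have hcl : Finset.univ.filter (fun k => i = k ∨ t ≤ X i k)
          = Finset.univ.filter (fun k => j = k ∨ t ≤ X j k) := by
        ext k
        simp only [Finset.mem_filter, Finset.mem_univ, true_and]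
        exact ⟨fun hk => htrans t ht j i k (hRsymm i j h) hk,
               fun hk => htrans t ht i j k h hk⟩
      simp only [hcl]
    · intro h
      have h1 : i = (Finset.univ.filter (fun k => i = k ∨ t ≤ X i k)).min' (hne i)
          ∨ t ≤ X i ((Finset.univ.filter (fun k => i = k ∨ t ≤ X i k)).min' (hne i)) := by
        have := Finset.min'_mem _ (hne i); simpa using this
      have h2 : j = (Finset.univ.filter (fun k => j = k ∨ t ≤ X j k)).min' (hne j)
          ∨ t ≤ X j ((Finset.univ.filter (fun k => j = k ∨ t ≤ X j k)).min' (hne j)) := by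
        have := Finset.min'_mem _ (hne j); simpa using this
      simp only [] at h
      rw [← h] at h2
      exact htrans t ht i _ j h1 (hRsymm _ _ h2)
  -- auxiliary sum identity
  have haux : ∀ (a b : Fin n) (u v : ℝ),
      (∑ k : Fin n, (if a = k then u else 0) * (if b = k then v else 0)) =
        if a = b then u * v else 0 := by
    intro a b u v
    rcases eq_or_ne a b with rfl | hab
    · rw [if_pos rfl]
      have hterm : ∀ k : Fin n, (if a = k then u else 0) * (if a = k then v else 0)
          = if a = k then u * v else 0 := by
        intro k; split <;> simp
      rw [Finset.sum_congr rfl fun k _ => hterm k, Finset.sum_ite_eq]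
      simp
    · rw [if_neg hab]
      apply Finset.sum_eq_zero
      intro k _
      by_cases hb : b = k
      · subst hb; rw [if_neg hab, zero_mul]
      · rw [if_neg hb, mul_zero]
  -- nonnegativity of the block-ones quadratic form at each level `t > 0`
  have hg : ∀ (y : Fin n → ℝ) (t : ℝ), 0 < t →
      0 ≤ ∑ p : Fin n × Fin n,
        y p.1 * y p.2 * (if p.1 = p.2 ∨ t ≤ X p.1 p.2 then (1:ℝ) else 0) := by
    intro y t ht
    obtain ⟨r, hr⟩ := hrel t ht
    have step1 : ∀ i j : Fin n, y i * y j * (if i = j ∨ t ≤ X i j then (1:ℝ) else 0)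
        = ∑ k : Fin n, (if r i = k then y i else 0) * (if r j = k then y j else 0) := by
      intro i j
      rw [haux]
      by_cases h : i = j ∨ t ≤ X i j
      · rw [if_pos h, if_pos ((hr i j).mp h), mul_one]
      · rw [if_neg h, if_neg (fun h' => h ((hr i j).mpr h')), mul_zero]
    have E : (∑ p : Fin n × Fin n,
          y p.1 * y p.2 * (if p.1 = p.2 ∨ t ≤ X p.1 p.2 then (1:ℝ) else 0))
        = ∑ k : Fin n, (∑ i : Fin n, if r i = k then y i else 0)^2 := by
      rw [Fintype.sum_prod_type]
      simp_rw [step1, sq, Finset.sum_mul_sum]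
      calc (∑ i : Fin n, ∑ j : Fin n, ∑ k : Fin n,
              (if r i = k then y i else 0) * (if r j = k then y j else 0))
          = ∑ i : Fin n, ∑ k : Fin n, ∑ j : Fin n,
              (if r i = k then y i else 0) * (if r j = k then y j else 0) :=
            Finset.sum_congr rfl fun i _ => Finset.sum_comm
        _ = ∑ k : Fin n, ∑ i : Fin n, ∑ j : Fin n,
              (if r i = k then y i else 0) * (if r j = k then y j else 0) :=
            Finset.sum_comm
    rw [E]
    exact Finset.sum_nonneg fun k _ => sq_nonneg _
  -- integral representation of the entries
  have hrep : ∀ i j : Fin n, X i j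
      = ∫ t in Set.Ioc (0:ℝ) 1, (if i = j ∨ t ≤ X i j then (1:ℝ) else 0) := by
    intro i j
    by_cases hij : i = j
    · subst hij
      rw [show (fun t : ℝ => if i = i ∨ t ≤ X i i then (1:ℝ) else 0) = fun _ => (1:ℝ)
          from funext fun t => if_pos (Or.inl rfl)]
      rw [setIntegral_const, Real.volume_real_Ioc, hdiag]
      norm_num
    · have hx := hbound i j
      rw [show (fun t : ℝ => if i = j ∨ t ≤ X i j then (1:ℝ) else 0)
          = Set.indicator (Set.Iic (X i j)) (fun _ => (1:ℝ)) from funext fun t => by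
        simp only [Set.indicator_apply, Set.mem_Iic, hij, false_or]]
      rw [setIntegral_indicator measurableSet_Iic, setIntegral_const]
      have hset : Set.Ioc (0:ℝ) 1 ∩ Set.Iic (X i j) = Set.Ioc 0 (X i j) := by
        ext s
        simp only [Set.mem_inter_iff, Set.mem_Ioc, Set.mem_Iic]
        constructor
        · rintro ⟨⟨h1, h2⟩, h3⟩; exact ⟨h1, h3⟩
        · rintro ⟨h1, h2⟩; exact ⟨⟨h1, le_trans h2 hx.2⟩, h2⟩
      rw [hset, Real.volume_real_Ioc, smul_eq_mul, mul_one,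
        max_eq_left (by linarith [hx.1] : (0:ℝ) ≤ X i j - 0)]
      ring
  -- integrability of each summand
  have hInt : ∀ (y : Fin n → ℝ) (p : Fin n × Fin n),
      IntegrableOn (fun t => y p.1 * y p.2 *
        (if p.1 = p.2 ∨ t ≤ X p.1 p.2 then (1:ℝ) else 0)) (Set.Ioc (0:ℝ) 1) := by
    intro y p
    have hconst : IntegrableOn (fun _ : ℝ => (1:ℝ)) (Set.Ioc (0:ℝ) 1) :=
      integrableOn_const measure_Ioc_lt_top.ne
    by_cases hij : p.1 = p.2
    · rw [show (fun t : ℝ => y p.1 * y p.2 *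
          (if p.1 = p.2 ∨ t ≤ X p.1 p.2 then (1:ℝ) else 0)) = fun _ => y p.1 * y p.2
          from funext fun t => by rw [if_pos (Or.inl hij), mul_one]]
      exact integrableOn_const measure_Ioc_lt_top.ne
    · rw [show (fun t : ℝ => y p.1 * y p.2 *
          (if p.1 = p.2 ∨ t ≤ X p.1 p.2 then (1:ℝ) else 0))
          = fun t => (y p.1 * y p.2) *
            Set.indicator (Set.Iic (X p.1 p.2)) (fun _ => (1:ℝ)) t from funext fun t => by
        simp only [Set.indicator_apply, Set.mem_Iic, hij, false_or]]
      exact (hconst.indicator measurableSet_Iic).const_mul _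
  refine Matrix.PosSemidef.of_dotProduct_mulVec_nonneg ?_ ?_
  · -- Hermitian
    ext i j
    simp only [Matrix.conjTranspose_apply, star_trivial]
    exact hsymm j i
  · intro y
    have hq : dotProduct (star y) (X.mulVec y)
        = ∑ p : Fin n × Fin n, y p.1 * y p.2 * X p.1 p.2 := by
      simp only [dotProduct, Matrix.mulVec, Pi.star_apply, star_trivial]
      rw [Fintype.sum_prod_type]
      refine Finset.sum_congr rfl fun i _ => ?_
      simp only [dotProduct]
      rw [Finset.mul_sum]
      exact Finset.sum_congr rfl fun j _ => by ring
    rw [hq]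
    have h1 : ∀ p : Fin n × Fin n, y p.1 * y p.2 * X p.1 p.2
        = ∫ t in Set.Ioc (0:ℝ) 1,
            y p.1 * y p.2 * (if p.1 = p.2 ∨ t ≤ X p.1 p.2 then (1:ℝ) else 0) := by
      intro p
      conv_lhs => rw [hrep p.1 p.2]
      rw [← integral_const_mul]
    calc (0:ℝ)
        ≤ ∫ t in Set.Ioc (0:ℝ) 1, ∑ p : Fin n × Fin n,
            y p.1 * y p.2 * (if p.1 = p.2 ∨ t ≤ X p.1 p.2 then (1:ℝ) else 0) := by
          apply setIntegral_nonneg measurableSet_Ioc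
          intro t ht
          exact hg y t ht.1
      _ = ∑ p : Fin n × Fin n, ∫ t in Set.Ioc (0:ℝ) 1,
            y p.1 * y p.2 * (if p.1 = p.2 ∨ t ≤ X p.1 p.2 then (1:ℝ) else 0) :=
          integral_finset_sum Finset.univ (fun p _ => hInt y p)
      _ = ∑ p : Fin n × Fin n, y p.1 * y p.2 * X p.1 p.2 :=
          Finset.sum_congr rfl fun p _ => (h1 p).symm
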